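/- Let G be a finite group with Sylow p-subgroup S and let Q ⊴ G be a normal p-subgroup (so Q ≤ S). Then Q is contained in every subgroup R ≤ S such that R is G-centric in S and O_p(N_G(R)/(R·C_G(R))) is trivial (i.e., R is radical and centric for the fusion of G on S). -/

import Mathlib

/-- A subgroup `R ≤ S` is *`G`-centric in `S`* if for every `g : G` with `R^g ≤ S`,
the centralizer in `S` of `R^g` is contained in `R^g`. -/
def IsGCentric {G : Type*} [Group G] (S R : Subgroup G) : Prop :=
  ∀ g : G, R.map (MulAut.conj g).toMonoidHom ≤ S →
    S ⊓ Subgroup.centralizer ↑(R.map (MulAut.conj g).toMonoidHom) ≤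
      R.map (MulAut.conj g).toMonoidHom

/-- Let `G` be a finite group with Sylow `p`-subgroup `S` and `Q ⊴ G` a
normal `p`-subgroup with `Q ≤ S`.  Then `Q` is contained in every `R ≤ S` which is
`G`-centric and radical, i.e. such that `O_p(N_G(R)/(R·C_G(R)))` is trivial.  The radical
condition is expressed via the correspondence between normal `p`-subgroups of the quotient
`N_G(R)/(R·C_G(R))` and normal subgroups `U` of `N_G(R)` containing `R·C_G(R)` with
`U/(R·C_G(R))` of `p`-power order. -/
theorem stmt_18 {G : Type*} [Group G] [Fintype G] (p : ℕ) [Fact p.Prime]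
    (S : Sylow p G) (Q : Subgroup G) [Q.Normal] (hQp : IsPGroup p Q)
    (hQS : Q ≤ S) (R : Subgroup G) (hRS : R ≤ S)
    (hcent : IsGCentric (S : Subgroup G) R)
    (hrad : ∀ U : Subgroup G,
      R ⊔ Subgroup.centralizer ↑R ≤ U → U ≤ (Subgroup.normalizer (R : Set G)) →
      (U.subgroupOf (Subgroup.normalizer (R : Set G))).Normal →
      (∃ n : ℕ, ((R ⊔ Subgroup.centralizer ↑R).subgroupOf U).index = p ^ n) →
      U = R ⊔ Subgroup.centralizer ↑R) :
    Q ≤ R := by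
  classical
  set N := Subgroup.normalizer (R : Set G) with hNdef
  set C := Subgroup.centralizer (R : Set G) with hCdef
  have hRN : R ≤ N := Subgroup.le_normalizer
  have hCN : C ≤ N := by
    intro c hc
    rw [Subgroup.mem_normalizer_iff]
    intro h
    constructor
    · intro hh
      have := hc h hh
      have : c * h * c⁻¹ = h := by
        rw [← this]; group
      rw [this]; exact hh
    · intro hh
      have hmem : c * h * c⁻¹ ∈ R := hh
      have := hc _ hmem
      have : h = c * h * c⁻¹ := by
        have h1 : (c * h * c⁻¹) * c = c * (c * h * c⁻¹) := this
        have : c * h = c * (c * h * c⁻¹) := by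
          rw [← h1]; group
        exact mul_left_cancel this
      rwa [← this] at hmem
  have hRCN : R ⊔ C ≤ N := sup_le hRN hCN
  -- normality facts inside N
  have hCnormal : ((C : Subgroup G).subgroupOf N).Normal := by
    rw [hCdef, ← Subgroup.normalizerMonoidHom_ker]
    exact MonoidHom.normal_ker _
  have hRnormal : (R.subgroupOf N).Normal := Subgroup.normal_in_normalizer
  have hRCnormal : ((R ⊔ C).subgroupOf N).Normal := by
    rw [Subgroup.subgroupOf_sup (A := R) (A' := C) (B := N) hRN hCN]
    exact Subgroup.sup_normal _ _
  have hQNle : Q ⊓ N ≤ N := inf_le_right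
  have hQNnormal : ((Q ⊓ N).subgroupOf N).Normal := by
    rw [Subgroup.inf_subgroupOf_right]
    infer_instance
  -- Step B: Q ⊓ N ≤ R ⊔ C
  have hQNRC : Q ⊓ N ≤ R ⊔ C := by
    set U := (R ⊔ C) ⊔ (Q ⊓ N) with hUdef
    have hUN : U ≤ N := sup_le hRCN hQNle
    have hUnormal : (U.subgroupOf N).Normal := by
      rw [hUdef, Subgroup.subgroupOf_sup (B := N) hRCN hQNle]
      exact Subgroup.sup_normal _ _
    have hQN' : IsPGroup p ((Q ⊓ N).subgroupOf N) :=
      (hQp.to_inf_left (K := N)).of_equiv (Subgroup.subgroupOfEquivOfLe hQNle).symm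
    have hindex : ∃ n : ℕ, ((R ⊔ C).subgroupOf U).index = p ^ n := by
      have h1 : ((R ⊔ C).subgroupOf U).index = (R ⊔ C).relIndex U := rfl
      have h2 : (R ⊔ C).relIndex U =
          ((R ⊔ C).subgroupOf N).relIndex (U.subgroupOf N) :=
        (Subgroup.relIndex_subgroupOf hUN).symm
      have h3 : U.subgroupOf N = ((R ⊔ C).subgroupOf N) ⊔ ((Q ⊓ N).subgroupOf N) :=
        Subgroup.subgroupOf_sup (B := N) hRCN hQNle
      have h4 : ((R ⊔ C).subgroupOf N).relIndex (U.subgroupOf N)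
          = ((R ⊔ C).subgroupOf N).relIndex ((Q ⊓ N).subgroupOf N) := by
        haveI := hRCnormal
        rw [h3, Subgroup.relIndex_sup_left]
      obtain ⟨n, hn⟩ := hQN'.index (((R ⊔ C).subgroupOf N).subgroupOf ((Q ⊓ N).subgroupOf N))
      exact ⟨n, by rw [h1, h2, h4]; exact hn⟩
    have := hrad U le_sup_left hUN hUnormal hindex
    calc Q ⊓ N ≤ U := le_sup_right
      _ = R ⊔ C := this
  -- Step C
  intro a ha
  by_contra haR
  set T := Q ⊔ R with hTdef
  have hTS : T ≤ (S : Subgroup G) := sup_le hQS hRS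
  have hRT : R ≤ T := le_sup_right
  have hQT : Q ≤ T := le_sup_left
  have hTp : IsPGroup p T := S.isPGroup'.to_le hTS
  haveI : Group.IsNilpotent T := hTp.isNilpotent
  have hnc : NormalizerCondition T := normalizerCondition_of_isNilpotent
  set R' := R.subgroupOf T with hR'def
  have hR'top : R' < ⊤ := by
    refine lt_of_le_of_ne le_top ?_
    intro heq
    have : (⟨a, hQT ha⟩ : T) ∈ R' := heq ▸ Subgroup.mem_top _
    exact haR (Subgroup.mem_subgroupOf.mp this)
  have hlt : R' < Subgroup.normalizer (R' : Set T) := hnc R' hR'top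
  obtain ⟨x, hxnorm, hxR'⟩ := SetLike.exists_of_lt hlt
  -- x normalizes R in G
  have hxN : (x : G) ∈ N := by
    rw [hNdef, Subgroup.mem_normalizer_iff]
    intro h
    constructor
    · intro hh
      have h1 : (⟨h, hRT hh⟩ : T) ∈ R' := Subgroup.mem_subgroupOf.mpr hh
      have h2 := (Subgroup.mem_normalizer_iff.mp hxnorm ⟨h, hRT hh⟩).mp h1
      exact Subgroup.mem_subgroupOf.mp h2
    · intro hh
      have hhT : h ∈ T := by
        have : h = (x : G)⁻¹ * ((x : G) * h * (x : G)⁻¹) * (x : G) := by group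
        rw [this]
        exact Subgroup.mul_mem _ (Subgroup.mul_mem _ (Subgroup.inv_mem _ x.2) (hRT hh)) x.2
      have h2 : x * (⟨h, hhT⟩ : T) * x⁻¹ ∈ R' := Subgroup.mem_subgroupOf.mpr hh
      have h1 := (Subgroup.mem_normalizer_iff.mp hxnorm ⟨h, hhT⟩).mpr h2
      exact Subgroup.mem_subgroupOf.mp h1
  -- decompose x = q * r with q ∈ Q, r ∈ R
  have hxT : (x : G) ∈ (↑(Q ⊔ R) : Set G) := x.2
  rw [Subgroup.normal_mul] at hxT
  obtain ⟨q, hq, r, hr, hqr⟩ := hxT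
  have hqN : q ∈ N := by
    have : q = (x : G) * r⁻¹ := by rw [← hqr]; group
    rw [this]
    exact Subgroup.mul_mem _ hxN (Subgroup.inv_mem _ (hRN hr))
  have hqS : q ∈ (S : Subgroup G) := by
    have : q = (x : G) * r⁻¹ := by rw [← hqr]; group
    rw [this]
    exact Subgroup.mul_mem _ (hTS x.2) (Subgroup.inv_mem _ (hRS hr))
  have hqRC : q ∈ R ⊔ C := hQNRC ⟨hq, hqN⟩
  -- decompose q = r₁ * c inside N
  have hq' : (⟨q, hqN⟩ : N) ∈ (R ⊔ C).subgroupOf N := Subgroup.mem_subgroupOf.mpr hqRC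
  rw [Subgroup.subgroupOf_sup (A := R) (A' := C) (B := N) hRN hCN] at hq'
  have hq'' : (⟨q, hqN⟩ : N) ∈ (↑(R.subgroupOf N ⊔ C.subgroupOf N) : Set N) := hq'
  rw [Subgroup.mul_normal (hN := hCnormal)] at hq''
  obtain ⟨r₁, hr₁, c₁, hc₁, hrc⟩ := hq''
  have hr₁R : (r₁ : G) ∈ R := Subgroup.mem_subgroupOf.mp hr₁
  have hc₁C : (c₁ : G) ∈ C := Subgroup.mem_subgroupOf.mp hc₁
  have hqeq : q = (r₁ : G) * (c₁ : G) := by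
    have := congrArg (Subtype.val) hrc
    simpa using this.symm
  have hc₁S : (c₁ : G) ∈ (S : Subgroup G) := by
    have : (c₁ : G) = (r₁ : G)⁻¹ * q := by rw [hqeq]; group
    rw [this]
    exact Subgroup.mul_mem _ (Subgroup.inv_mem _ (hRS hr₁R)) hqS
  -- centricity with g = 1
  have hmap1 : R.map (MulAut.conj (1 : G)).toMonoidHom = R := by
    ext y
    simp [Subgroup.mem_map, MulAut.conj_apply]
  have hcent1 : (S : Subgroup G) ⊓ C ≤ R := by
    have := hcent 1
    rw [hmap1] at this
    exact this hRS
  have hc₁R : (c₁ : G) ∈ R := hcent1 ⟨hc₁S, hc₁C⟩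
  have hqR : q ∈ R := by rw [hqeq]; exact Subgroup.mul_mem _ hr₁R hc₁R
  have hxR : (x : G) ∈ R := by rw [← hqr]; exact Subgroup.mul_mem _ hqR hr
  exact hxR' (Subgroup.mem_subgroupOf.mpr hxR)
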